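/- Every nondegenerate quadratic form Q on (ℤ/2)^(2m) with Arf invariant 0 is equivalent to the m-fold direct sum Q₁ ⊕ ⋯ ⊕ Q₁, and every such form with Arf invariant 1 is equivalent to Q₁ ⊕ ⋯ ⊕ Q₁ ⊕ Q₂ ((m-1) copies of Q₁ and one Q₂). -/

import Mathlib

open Finset

abbrev P2 := ZMod 2 × ZMod 2

def qtt (t : ZMod 2) (p : P2) : ZMod 2 := t * (p.1 + p.2) + p.1 * p.2

def involEquiv {M : Type*} [AddCommGroup M] [Module (ZMod 2) M]
    (f : M →ₗ[ZMod 2] M) (hf : ∀ x, f (f x) = x) : M ≃ₗ[ZMod 2] M :=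
  { f with invFun := f, left_inv := hf, right_inv := hf }

@[simp] lemma involEquiv_apply {M : Type*} [AddCommGroup M] [Module (ZMod 2) M]
    (f : M →ₗ[ZMod 2] M) (hf : ∀ x, f (f x) = x) (x : M) :
    involEquiv f hf x = f x := rfl

def gmixF (p : P2 × P2) : P2 × P2 :=
  ((p.1.2 + p.2.1 + p.2.2, p.1.1 + p.2.1 + p.2.2),
   (p.1.1 + p.1.2 + p.2.2, p.1.1 + p.1.2 + p.2.1))

lemma gmixF_invol : ∀ p, gmixF (gmixF p) = p := by decide

lemma gmixF_key : ∀ x y : P2,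
    qtt 1 x + qtt 1 y = qtt 0 (gmixF (x, y)).1 + qtt 0 (gmixF (x, y)).2 := by decide

def mixMap (m : ℕ) (i j : Fin m) : (Fin m → P2) →ₗ[ZMod 2] (Fin m → P2) where
  toFun w := fun k =>
    if k = i then (gmixF (w i, w j)).1 else if k = j then (gmixF (w i, w j)).2 else w k
  map_add' x y := by
    funext k
    by_cases h1 : k = i <;> by_cases h2 : k = j <;> by_cases h3 : j = i <;>
      simp [h1, h2, h3, gmixF, Prod.ext_iff, Pi.add_apply] <;> (try constructor) <;> ring
  map_smul' c x := by
    funext k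
    rcases (by decide : ∀ c : ZMod 2, c = 0 ∨ c = 1) c with rfl | rfl <;>
      · by_cases h1 : k = i <;> by_cases h2 : k = j <;> by_cases h3 : j = i <;>
          simp [h1, h2, h3, gmixF, Prod.ext_iff]

@[simp] lemma mixMap_apply (m : ℕ) (i j : Fin m) (w : Fin m → P2) (k : Fin m) :
    mixMap m i j w k =
      if k = i then (gmixF (w i, w j)).1 else if k = j then (gmixF (w i, w j)).2 else w k := rfl

lemma mixMap_invol (m : ℕ) (i j : Fin m) (hij : i ≠ j) :
    ∀ w, mixMap m i j (mixMap m i j w) = w := by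
  intro w
  have hwi : mixMap m i j w i = (gmixF (w i, w j)).1 := by simp
  have hwj : mixMap m i j w j = (gmixF (w i, w j)).2 := by simp [hij.symm]
  have h2 : gmixF ((gmixF (w i, w j)).1, (gmixF (w i, w j)).2) = (w i, w j) := by
    rw [Prod.mk.eta]; exact gmixF_invol _
  funext k
  rw [mixMap_apply, hwi, hwj]
  by_cases hki : k = i
  · rw [if_pos hki, h2, hki]
  · rw [if_neg hki]
    by_cases hkj : k = j
    · rw [if_pos hkj, h2, hkj]
    · rw [if_neg hkj, mixMap_apply, if_neg hki, if_neg hkj]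
lemma keyW (m : ℕ) (k : ℕ) : ∀ (t : Fin m → ZMod 2),
    (Finset.univ.filter (fun j => t j = 1)).card = k →
    ∃ e : (Fin m → P2) ≃ₗ[ZMod 2] (Fin m → P2),
      ∀ w, ∑ j, qtt (t j) (w j)
        = ∑ j, qtt (if j.val = 0 then ∑ i, t i else 0) (e w j) := by
  induction k using Nat.strong_induction_on with
  | _ k IH =>
  intro t hk
  match k, hk with
  | 0, hk =>
    -- all t j = 0
    have ht : ∀ j, t j = 0 := by
      intro j
      by_contra h
      have h1 : t j = 1 := by
        rcases (by decide : ∀ c : ZMod 2, c = 0 ∨ c = 1) (t j) with h' | h'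
        · exact absurd h' h
        · exact h'
      have : j ∈ Finset.univ.filter (fun j => t j = 1) := by simp [h1]
      rw [Finset.card_eq_zero.mp hk] at this
      simp at this
    refine ⟨LinearEquiv.refl _ _, fun w => Finset.sum_congr rfl fun j _ => ?_⟩
    rw [ht j]
    have hs : (∑ i, t i) = 0 := by
      rw [Finset.sum_congr rfl fun i _ => ht i]; simp
    rw [hs]
    split_ifs <;> rfl
  | 1, hk =>
    obtain ⟨i, hi⟩ := Finset.card_eq_one.mp hk
    have hmem : ∀ j, t j = 1 ↔ j = i := by
      intro j
      constructor
      · intro h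
        have : j ∈ Finset.univ.filter (fun j => t j = 1) := by simp [h]
        rw [hi] at this; simpa using this
      · intro h
        rw [h]
        have : i ∈ Finset.univ.filter (fun j => t j = 1) := by
          rw [hi]; exact Finset.mem_singleton_self i
        simpa using this
    have hti : t i = 1 := (hmem i).mpr rfl
    have ht0 : ∀ j, j ≠ i → t j = 0 := by
      intro j hj
      rcases (by decide : ∀ c : ZMod 2, c = 0 ∨ c = 1) (t j) with h' | h'
      · exact h'
      · exact absurd ((hmem j).mp h') hj
    have hsum : (∑ i, t i) = 1 := by
      rw [Finset.sum_eq_single i (fun j _ hj => ht0 j hj) (by simp)]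
      exact hti
    have hm : 0 < m := i.pos
    let z : Fin m := ⟨0, hm⟩
    let σ : Equiv.Perm (Fin m) := Equiv.swap z i
    refine ⟨LinearEquiv.funCongrLeft (ZMod 2) P2 σ, fun w => ?_⟩
    have happ : ∀ j, (LinearEquiv.funCongrLeft (ZMod 2) P2 σ) w j = w (σ j) := fun j => rfl
    have hts : ∀ j, (if j.val = 0 then ∑ i, t i else 0) = t (σ j) := by
      intro j
      by_cases hj : j = z
      · rw [hj]
        rw [if_pos (show (z : ℕ) = 0 from rfl), hsum]
        have hσz : σ z = i := Equiv.swap_apply_left z i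
        rw [hσz, hti]
      · have : j.val ≠ 0 := fun h => hj (Fin.ext h)
        rw [if_neg this]
        by_cases hji : j = i
        · subst hji
          rw [Equiv.swap_apply_right]
          exact (ht0 z (fun h => hj (h ▸ rfl))).symm  -- t z = 0 needs z ≠ i
        · rw [Equiv.swap_apply_of_ne_of_ne hj hji]
          exact (ht0 j hji).symm
    calc ∑ j, qtt (t j) (w j) = ∑ j, qtt (t (σ j)) (w (σ j)) :=
          (Equiv.sum_comp σ (fun j => qtt (t j) (w j))).symm
      _ = ∑ j, qtt (if j.val = 0 then ∑ i, t i else 0)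
            ((LinearEquiv.funCongrLeft (ZMod 2) P2 σ) w j) := by
          refine Finset.sum_congr rfl fun j _ => ?_
          rw [hts j, happ j]
  | (k+2), hk =>
    have h2 : 1 < (Finset.univ.filter (fun j => t j = 1)).card := by omega
    obtain ⟨i, hi, j, hj, hij⟩ := Finset.one_lt_card.mp h2
    have hti : t i = 1 := by simpa using hi
    have htj : t j = 1 := by simpa using hj
    set t' := Function.update (Function.update t i 0) j 0 with ht'
    have ht'i : t' i = 0 := by
      rw [ht', Function.update_apply, if_neg hij]
      simp
    have ht'j : t' j = 0 := by simp [ht']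
    have ht'o : ∀ l, l ≠ i → l ≠ j → t' l = t l := by
      intro l h1 h2
      simp [ht', Function.update_apply, h1, h2]
    have hcard : (Finset.univ.filter (fun l => t' l = 1)).card = k := by
      have : Finset.univ.filter (fun l => t' l = 1)
          = (Finset.univ.filter (fun l => t l = 1)) \ {i, j} := by
        ext l
        simp only [Finset.mem_filter, Finset.mem_univ, true_and, Finset.mem_sdiff,
          Finset.mem_insert, Finset.mem_singleton]
        constructor
        · intro h
          have hli : l ≠ i := fun e => by rw [e, ht'i] at h; exact one_ne_zero h.symm
          have hlj : l ≠ j := fun e => by rw [e, ht'j] at h; exact one_ne_zero h.symm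
          exact ⟨(ht'o l hli hlj) ▸ h, fun e => e.elim hli hlj⟩
        · rintro ⟨h, hn⟩
          push_neg at hn
          rw [ht'o l hn.1 hn.2]; exact h
      rw [this, Finset.card_sdiff_of_subset]
      · rw [hk, Finset.card_insert_of_notMem (by simpa using hij), Finset.card_singleton]
        omega
      · intro l hl
        simp only [Finset.mem_insert, Finset.mem_singleton] at hl
        rcases hl with rfl | rfl
        · exact hi
        · exact hj
    have hiI : i ∈ Finset.univ \ ({j} : Finset (Fin m)) := by simp [hij]
    have hsplit : ∀ (f : Fin m → ZMod 2),
        ∑ l, f l = f j + (f i + ∑ l ∈ (Finset.univ \ {j}) \ {i}, f l) := by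
      intro f
      rw [Finset.sum_eq_add_sum_sdiff_singleton_of_mem (Finset.mem_univ j) f,
          Finset.sum_eq_add_sum_sdiff_singleton_of_mem hiI f]
    have hsum' : (∑ l, t' l) = ∑ l, t l := by
      have hrest : ∀ l ∈ (Finset.univ \ {j}) \ {i}, t' l = t l := by
        intro l hl
        simp only [Finset.mem_sdiff, Finset.mem_singleton, Finset.mem_univ, true_and] at hl
        exact ht'o l hl.2 hl.1
      rw [hsplit t', hsplit t, ht'i, ht'j, hti, htj, Finset.sum_congr rfl hrest]
      have : ∀ S : ZMod 2, 0 + (0 + S) = 1 + (1 + S) := by decide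
      exact this _
    obtain ⟨e', he'⟩ := IH k (by omega) t' hcard
    let e₀ := involEquiv (mixMap m i j) (mixMap_invol m i j hij)
    refine ⟨e₀.trans e', fun w => ?_⟩
    have he₀i : e₀ w i = (gmixF (w i, w j)).1 := by simp [e₀]
    have he₀j : e₀ w j = (gmixF (w i, w j)).2 := by simp [e₀, hij.symm]
    have he₀o : ∀ l, l ≠ i → l ≠ j → e₀ w l = w l := by
      intro l h1 h2; simp [e₀, h1, h2]
    have step1 : ∑ l, qtt (t l) (w l) = ∑ l, qtt (t' l) (e₀ w l) := by
      have hrest : ∀ l ∈ (Finset.univ \ {j}) \ {i},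
          qtt (t' l) (e₀ w l) = qtt (t l) (w l) := by
        intro l hl
        simp only [Finset.mem_sdiff, Finset.mem_singleton, Finset.mem_univ, true_and] at hl
        rw [ht'o l hl.2 hl.1, he₀o l hl.2 hl.1]
      rw [hsplit (fun l => qtt (t l) (w l)), hsplit (fun l => qtt (t' l) (e₀ w l)),
          hti, htj, ht'i, ht'j, he₀i, he₀j, Finset.sum_congr rfl hrest]
      linear_combination gmixF_key (w i) (w j)
    rw [step1, he' (e₀ w), hsum']
    rfl
def nfF (a c : ZMod 2) (p : P2) : P2 := (p.1 + (c*(1+a))*p.2, (a*(1+c))*p.1 + p.2)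

lemma nfF_invol : ∀ a c p, nfF a c (nfF a c p) = p := by decide

lemma nfF_key : ∀ a c (p : P2), a*p.1 + c*p.2 + p.1*p.2 = qtt (a*c) (nfF a c p) := by decide

def nfMap (a c : ZMod 2) : P2 →ₗ[ZMod 2] P2 where
  toFun := nfF a c
  map_add' x y := by simp only [nfF, Prod.ext_iff, Prod.fst_add, Prod.snd_add]
                     constructor <;> ring
  map_smul' r x := by
    rcases (by decide : ∀ c : ZMod 2, c = 0 ∨ c = 1) r with rfl | rfl <;>
      simp [nfF, Prod.ext_iff]

def nfe (a c : ZMod 2) : P2 ≃ₗ[ZMod 2] P2 :=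
  involEquiv (nfMap a c) (fun p => nfF_invol a c p)

@[simp] lemma nfe_apply (a c : ZMod 2) (p : P2) : nfe a c p = nfF a c p := rfl
set_option maxHeartbeats 1000000 in
/-- Arf's classification: a nondegenerate quadratic form on `(ℤ/2)^(2m)` with
Arf invariant 0 is equivalent to `Q₁^(⊕m)`, and one with Arf invariant 1 is
equivalent to `Q₁^(⊕(m-1)) ⊕ Q₂`. -/
theorem stmt16 (m : ℕ) (Q : (Fin (2 * m) → ZMod 2) → ZMod 2)
    (hB₁ : ∀ x y z : Fin (2 * m) → ZMod 2,
      Q (x + y + z) + Q (x + y) + Q z =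
        (Q (x + z) + Q x + Q z) + (Q (y + z) + Q y + Q z))
    (hB₂ : ∀ x y z : Fin (2 * m) → ZMod 2,
      Q (x + (y + z)) + Q x + Q (y + z) =
        (Q (x + y) + Q x + Q y) + (Q (x + z) + Q x + Q z))
    (hnd : ∀ x : Fin (2 * m) → ZMod 2,
      (∀ y, Q (x + y) + Q x + Q y = 0) → x = 0)
    (b : Module.Basis (Fin m ⊕ Fin m) (ZMod 2) (Fin (2 * m) → ZMod 2))
    (hb₁ : ∀ i j, Q (b (Sum.inl i) + b (Sum.inl j)) + Q (b (Sum.inl i)) +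
      Q (b (Sum.inl j)) = 0)
    (hb₂ : ∀ i j, Q (b (Sum.inr i) + b (Sum.inr j)) + Q (b (Sum.inr i)) +
      Q (b (Sum.inr j)) = 0)
    (hb₃ : ∀ i j, Q (b (Sum.inl i) + b (Sum.inr j)) + Q (b (Sum.inl i)) +
      Q (b (Sum.inr j)) = if i = j then 1 else 0) :
    ((∑ j : Fin m, Q (b (Sum.inl j)) * Q (b (Sum.inr j))) = 0 →
      ∃ f : (Fin (2 * m) → ZMod 2) ≃ₗ[ZMod 2] (Fin m → ZMod 2 × ZMod 2),
        ∀ x, Q x = ∑ j : Fin m, (f x j).1 * (f x j).2) ∧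
    ((∑ j : Fin m, Q (b (Sum.inl j)) * Q (b (Sum.inr j))) = 1 →
      ∃ f : (Fin (2 * m) → ZMod 2) ≃ₗ[ZMod 2]
          ((Fin (m - 1) → ZMod 2 × ZMod 2) × (ZMod 2 × ZMod 2)),
        ∀ x, Q x = (∑ j : Fin (m - 1), ((f x).1 j).1 * ((f x).1 j).2) +
          ((f x).2.1 + (f x).2.1 * (f x).2.2 + (f x).2.2)) := by
  classical
  have hz2 : ∀ c : ZMod 2, c = 0 ∨ c = 1 := by decide
  have hxx : ∀ a : ZMod 2, a + a = 0 := by decide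
  have hQ0 : Q 0 = 0 := by
    have h := hB₂ 0 0 0
    simp only [add_zero] at h
    exact (by decide : ∀ a : ZMod 2, a + a + a = a+a+a+(a+a+a) → a = 0) _ h
  -- the polar form of Q, as a bilinear map
  let Bf : (Fin (2*m) → ZMod 2) →ₗ[ZMod 2] (Fin (2*m) → ZMod 2) →ₗ[ZMod 2] ZMod 2 :=
    LinearMap.mk₂ (ZMod 2) (fun x y => Q (x + y) + Q x + Q y)
      (fun x y z => hB₁ x y z)
      (fun c x y => by
        rcases hz2 c with rfl | rfl
        · simp only [zero_smul, zero_add, hQ0, add_zero, smul_eq_mul, zero_mul]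
          exact hxx _
        · simp)
      (fun x y z => hB₂ x y z)
      (fun c x y => by
        rcases hz2 c with rfl | rfl
        · simp only [zero_smul, add_zero, hQ0, smul_eq_mul, zero_mul]
          exact hxx _
        · simp)
  -- the coordinate bilinear map
  let Bf' : (Fin (2*m) → ZMod 2) →ₗ[ZMod 2] (Fin (2*m) → ZMod 2) →ₗ[ZMod 2] ZMod 2 :=
    LinearMap.mk₂ (ZMod 2)
      (fun x y => ∑ j : Fin m, (b.coord (Sum.inl j) x * b.coord (Sum.inr j) y
        + b.coord (Sum.inl j) y * b.coord (Sum.inr j) x))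
      (fun x₁ x₂ y => by
        rw [← Finset.sum_add_distrib]
        refine Finset.sum_congr rfl fun j _ => ?_
        simp only [map_add]
        ring)
      (fun c x y => by
        rw [Finset.smul_sum]
        refine Finset.sum_congr rfl fun j _ => ?_
        simp only [map_smul, smul_eq_mul]
        ring)
      (fun x y₁ y₂ => by
        rw [← Finset.sum_add_distrib]
        refine Finset.sum_congr rfl fun j _ => ?_
        simp only [map_add]
        ring)
      (fun c x y => by
        rw [Finset.smul_sum]
        refine Finset.sum_congr rfl fun j _ => ?_
        simp only [map_smul, smul_eq_mul]
        ring)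
  have hco : ∀ s s' : Fin m ⊕ Fin m, b.coord s (b s') = if s' = s then 1 else 0 := by
    intro s s'
    simp [Module.Basis.coord_apply, Module.Basis.repr_self, Finsupp.single_apply]
  have hBsymm : ∀ x y, Bf x y = Bf y x := by
    intro x y
    show Q (x + y) + Q x + Q y = Q (y + x) + Q y + Q x
    rw [add_comm x y]; ring
  have hBB : Bf = Bf' := by
    refine Module.Basis.ext b fun s => Module.Basis.ext b fun s' => ?_
    have hBval : Bf (b s) (b s') = Q (b s + b s') + Q (b s) + Q (b s') := rfl
    have hBval' : Bf' (b s) (b s') = ∑ j : Fin m,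
        (b.coord (Sum.inl j) (b s) * b.coord (Sum.inr j) (b s')
          + b.coord (Sum.inl j) (b s') * b.coord (Sum.inr j) (b s)) := rfl
    rw [hBval, hBval']
    have hsum2 : ∀ i i' : Fin m, ∑ j : Fin m,
        (if i = j then (1:ZMod 2) else 0) * (if i' = j then 1 else 0)
          = if i = i' then 1 else 0 := by
      intro i i'
      rw [Finset.sum_congr rfl (fun j _ => (ite_mul _ _ _ _ : _))]
      simp only [one_mul, zero_mul]
      rw [Finset.sum_ite_eq Finset.univ i (fun j => if i' = j then (1:ZMod 2) else 0)]
      simp [eq_comm]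
    rcases s with i | i <;> rcases s' with i' | i'
    · rw [hb₁ i i']
      refine (Finset.sum_eq_zero fun j _ => ?_).symm
      rw [hco, hco, hco, hco]
      simp
    · rw [hb₃ i i', Finset.sum_congr rfl (fun j _ => show _ =
          (if i = j then (1:ZMod 2) else 0) * (if i' = j then 1 else 0) from by
        rw [hco, hco, hco, hco]
        simp), hsum2 i i']
    · have hHL : Q (b (Sum.inr i) + b (Sum.inl i')) + Q (b (Sum.inr i)) + Q (b (Sum.inl i'))
          = if i' = i then 1 else 0 := by
        rw [add_comm (b (Sum.inr i))]
        linear_combination hb₃ i' i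
      rw [hHL, Finset.sum_congr rfl (fun j _ => show _ =
          (if i' = j then (1:ZMod 2) else 0) * (if i = j then 1 else 0) from by
        rw [hco, hco, hco, hco]
        simp), hsum2 i' i]
    · rw [hb₂ i i']
      refine (Finset.sum_eq_zero fun j _ => ?_).symm
      rw [hco, hco, hco, hco]
      simp
  -- the coordinate expression for Q
  have hQ'add : ∀ x y : Fin (2*m) → ZMod 2,
      (∑ j : Fin m, (Q (b (Sum.inl j)) * b.coord (Sum.inl j) (x+y)
        + Q (b (Sum.inr j)) * b.coord (Sum.inr j) (x+y)
        + b.coord (Sum.inl j) (x+y) * b.coord (Sum.inr j) (x+y)))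
      = Bf' x y
        + (∑ j : Fin m, (Q (b (Sum.inl j)) * b.coord (Sum.inl j) x
          + Q (b (Sum.inr j)) * b.coord (Sum.inr j) x
          + b.coord (Sum.inl j) x * b.coord (Sum.inr j) x))
        + (∑ j : Fin m, (Q (b (Sum.inl j)) * b.coord (Sum.inl j) y
          + Q (b (Sum.inr j)) * b.coord (Sum.inr j) y
          + b.coord (Sum.inl j) y * b.coord (Sum.inr j) y)) := by
    intro x y
    have hBf'v : Bf' x y = ∑ j : Fin m, (b.coord (Sum.inl j) x * b.coord (Sum.inr j) y
        + b.coord (Sum.inl j) y * b.coord (Sum.inr j) x) := rfl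
    rw [hBf'v, ← Finset.sum_add_distrib, ← Finset.sum_add_distrib]
    refine Finset.sum_congr rfl fun j _ => ?_
    simp only [map_add]
    have key : ∀ A C ux uy vx vy : ZMod 2,
        A * (ux + uy) + C * (vx + vy) + (ux + uy) * (vx + vy)
          = (ux * vy + uy * vx) + (A * ux + C * vx + ux * vx)
            + (A * uy + C * vy + uy * vy) := by decide
    exact key _ _ _ _ _ _
  have hQadd : ∀ x y, Q (x + y) = Bf x y + Q x + Q y := by
    intro x y
    have h : Bf x y = Q (x + y) + Q x + Q y := rfl
    exact (by decide : ∀ p q r s : ZMod 2, s = p + q + r → p = s + q + r) _ _ _ _ h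
  let D : (Fin (2*m) → ZMod 2) →ₗ[ZMod 2] ZMod 2 :=
  { toFun := fun x => Q x + ∑ j : Fin m, (Q (b (Sum.inl j)) * b.coord (Sum.inl j) x
      + Q (b (Sum.inr j)) * b.coord (Sum.inr j) x
      + b.coord (Sum.inl j) x * b.coord (Sum.inr j) x)
    map_add' := fun x y => by
      rw [hQadd x y, hQ'add x y, hBB]
      have : ∀ B qx qy px py : ZMod 2,
          (B + qx + qy) + (B + px + py) = (qx + px) + (qy + py) := by decide
      exact this _ _ _ _ _
    map_smul' := fun c x => by
      rcases hz2 c with rfl | rfl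
      · simp [hQ0]
      · simp }
  have hDb : ∀ s, D (b s) = 0 := by
    intro s
    have hDv : D (b s) = Q (b s) + ∑ j : Fin m, (Q (b (Sum.inl j)) * b.coord (Sum.inl j) (b s)
      + Q (b (Sum.inr j)) * b.coord (Sum.inr j) (b s)
      + b.coord (Sum.inl j) (b s) * b.coord (Sum.inr j) (b s)) := rfl
    rw [hDv]
    rcases s with i | i
    · rw [Finset.sum_congr rfl (fun j _ => show _ =
          (if i = j then Q (b (Sum.inl j)) else (0:ZMod 2)) from by
        rw [hco, hco]
        simp only [Sum.inl.injEq, reduceCtorEq, if_false, mul_zero, add_zero, zero_mul]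
        split_ifs <;> ring)]
      rw [Finset.sum_ite_eq Finset.univ i (fun j => Q (b (Sum.inl j)))]
      simp only [Finset.mem_univ, if_true, zero_mul]
      exact hxx _
    · rw [Finset.sum_congr rfl (fun j _ => show _ =
          (if i = j then Q (b (Sum.inr j)) else (0:ZMod 2)) from by
        rw [hco, hco]
        simp only [Sum.inr.injEq, reduceCtorEq, if_false, mul_zero, add_zero, zero_mul]
        split_ifs <;> ring)]
      rw [Finset.sum_ite_eq Finset.univ i (fun j => Q (b (Sum.inr j)))]
      simp only [Finset.mem_univ, if_true, zero_mul]
      exact hxx _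
  have hD0 : D = 0 := Module.Basis.ext b fun s => by rw [hDb s]; rfl
  have hQrep : ∀ x, Q x = ∑ j : Fin m, (Q (b (Sum.inl j)) * b.coord (Sum.inl j) x
      + Q (b (Sum.inr j)) * b.coord (Sum.inr j) x
      + b.coord (Sum.inl j) x * b.coord (Sum.inr j) x) := by
    intro x
    have h : D x = 0 := by rw [hD0]; rfl
    have hDv : D x = Q x + ∑ j : Fin m, (Q (b (Sum.inl j)) * b.coord (Sum.inl j) x
      + Q (b (Sum.inr j)) * b.coord (Sum.inr j) x
      + b.coord (Sum.inl j) x * b.coord (Sum.inr j) x) := rfl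
    rw [hDv] at h
    exact (by decide : ∀ p q : ZMod 2, p + q = 0 → p = q) _ _ h
  -- linear equivalence to (Fin m → P2)
  let sp : ((Fin m ⊕ Fin m) → ZMod 2) ≃ₗ[ZMod 2] (Fin m → P2) :=
  { toFun := fun w j => (w (Sum.inl j), w (Sum.inr j))
    invFun := fun w => Sum.elim (fun j => (w j).1) (fun j => (w j).2)
    map_add' := fun x y => rfl
    map_smul' := fun c x => rfl
    left_inv := fun w => funext fun s => by cases s <;> rfl
    right_inv := fun w => rfl }
  let g := b.equivFun.trans sp
  have hg : ∀ x j, g x j = (b.coord (Sum.inl j) x, b.coord (Sum.inr j) x) := by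
    intro x j
    show (b.equivFun x (Sum.inl j), b.equivFun x (Sum.inr j)) = _
    rw [Module.Basis.coord_apply, Module.Basis.coord_apply]
    congr 1
  let pce : (Fin m → P2) ≃ₗ[ZMod 2] (Fin m → P2) :=
    LinearEquiv.piCongrRight (fun j => nfe (Q (b (Sum.inl j))) (Q (b (Sum.inr j))))
  obtain ⟨e, he⟩ := keyW m (Finset.univ.filter
      (fun j => Q (b (Sum.inl j)) * Q (b (Sum.inr j)) = 1)).card
      (fun j => Q (b (Sum.inl j)) * Q (b (Sum.inr j))) rfl
  have hQh : ∀ x, Q x = ∑ j : Fin m, qtt (if (j : Fin m).val = 0 then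
      (∑ i : Fin m, Q (b (Sum.inl i)) * Q (b (Sum.inr i))) else 0)
      (e (pce (g x)) j) := by
    intro x
    rw [hQrep x]
    have h1 : ∀ j : Fin m, (Q (b (Sum.inl j)) * b.coord (Sum.inl j) x
        + Q (b (Sum.inr j)) * b.coord (Sum.inr j) x
        + b.coord (Sum.inl j) x * b.coord (Sum.inr j) x)
        = qtt (Q (b (Sum.inl j)) * Q (b (Sum.inr j))) (pce (g x) j) := by
      intro j
      have hpce : pce (g x) j = nfF (Q (b (Sum.inl j))) (Q (b (Sum.inr j))) (g x j) := rfl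
      rw [hpce, hg x j]
      exact nfF_key (Q (b (Sum.inl j))) (Q (b (Sum.inr j))) (b.coord (Sum.inl j) x, b.coord (Sum.inr j) x)
    rw [Finset.sum_congr rfl (fun j _ => h1 j), he (pce (g x))]
  constructor
  · intro hA
    refine ⟨(g.trans pce).trans e, fun x => ?_⟩
    have : (g.trans pce).trans e x = e (pce (g x)) := rfl
    rw [this, hQh x, hA]
    refine Finset.sum_congr rfl fun j _ => ?_
    rw [ite_self]
    show qtt 0 _ = _
    rw [qtt]
    ring
  · intro hA
    have hm : m ≠ 0 := by
      rintro rfl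
      rw [Finset.univ_eq_empty, Finset.sum_empty] at hA
      exact (by decide : (0:ZMod 2) ≠ 1) hA
    obtain ⟨n, rfl⟩ : ∃ n, m = n + 1 := ⟨m - 1, by omega⟩
    simp only [Nat.succ_sub_one]
    let spl : (Fin (n+1) → P2) ≃ₗ[ZMod 2] (Fin n → P2) × P2 :=
    { toFun := fun w => (fun j => w j.succ, w 0)
      invFun := fun p => Fin.cons p.2 p.1
      map_add' := fun x y => rfl
      map_smul' := fun c x => rfl
      left_inv := fun w => Fin.cons_self_tail w
      right_inv := fun p => by
        dsimp only
        refine Prod.ext (funext fun j => ?_) ?_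
        · simp [Fin.cons_succ]
        · simp [Fin.cons_zero] }
    refine ⟨((g.trans pce).trans e).trans spl, fun x => ?_⟩
    have hfx1 : ∀ j : Fin n, ((((g.trans pce).trans e).trans spl x).1 j) = e (pce (g x)) j.succ := by
      intro j
      simp only [LinearEquiv.trans_apply]
      rfl
    have hfx2 : (((g.trans pce).trans e).trans spl x).2 = e (pce (g x)) 0 := by
      simp only [LinearEquiv.trans_apply]
      rfl
    have hsm : ∑ j : Fin n, ((((g.trans pce).trans e).trans spl x).1 j).1 *
        ((((g.trans pce).trans e).trans spl x).1 j).2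
        = ∑ j : Fin n, (e (pce (g x)) j.succ).1 * (e (pce (g x)) j.succ).2 :=
      Finset.sum_congr rfl fun j _ => by rw [hfx1 j]
    rw [hQh x, hA, Fin.sum_univ_succ, hsm, hfx2]
    rw [Finset.sum_congr rfl (fun j _ => show qtt (if (j.succ : Fin (n+1)).val = 0 then 1 else 0)
        (e (pce (g x)) j.succ) = qtt 0 (e (pce (g x)) j.succ) from by
      rw [if_neg (by simp [Fin.val_succ])])]
    rw [if_pos (show ((0 : Fin (n+1))).val = 0 from rfl)]
    simp only [qtt, zero_mul, zero_add, one_mul]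
    ring
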